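/- A prediction σ̂ is strongly rational with respect to a deviation set Φ relative to σ if and only if it satisfies the standard ICE polytope relative to σ: for every deviation f ∈ Φ, the expected regret feature vector r(f,σ̂) lies in the convex hull of the set {r(g,σ) : g ∈ Φ} ⊆ ℝ^d (equivalently, for every f ∈ Φ there exists a probability distribution η_f on Φ with r(f,σ̂) = Σ_{g∈Φ} η_f(g) r(g,σ)). -/

import Mathlib

open scoped BigOperators

/-- Dot product on `ℝ^d`. -/
def dot {d : ℕ} (x w : Fin d → ℝ) : ℝ := ∑ k, x k * w k

/-- `σ` is a probability distribution on the finite set `A`. -/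
def IsProb {A : Type} [Fintype A] (σ : A → ℝ) : Prop :=
  (∀ a, 0 ≤ σ a) ∧ ∑ a, σ a = 1

/-- Expected regret features of deviation `f` under distribution `σ`. -/
def expFeat {d : ℕ} {A Φ : Type} [Fintype A] (r : Φ → A → Fin d → ℝ)
    (σ : A → ℝ) (f : Φ) : Fin d → ℝ := ∑ a, σ a • r f a

/-- `Regret_Φ(σ|w) = max_{f ∈ Φ} ⟨r(f,σ), w⟩`. -/
noncomputable def Regret {d : ℕ} {A Φ : Type} [Fintype A] [Fintype Φ] [Nonempty Φ]
    (r : Φ → A → Fin d → ℝ) (σ : A → ℝ) (w : Fin d → ℝ) : ℝ :=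
  ⨆ f : Φ, dot (expFeat r σ f) w

private lemma dot_linear {d : ℕ} (w : Fin d → ℝ) :
    IsLinearMap ℝ (fun x : Fin d → ℝ => dot x w) := by
  constructor
  · intro x y
    simp [dot, add_mul, Finset.sum_add_distrib]
  · intro c x
    simp [dot, Finset.mul_sum, mul_assoc]

private lemma clm_eq_dot {d : ℕ} (φ : (Fin d → ℝ) →L[ℝ] ℝ) (x : Fin d → ℝ) :
    φ x = dot x (fun k => φ (Pi.single k 1)) := by
  conv_lhs => rw [pi_eq_sum_univ x]
  rw [map_sum]
  simp only [map_smul, smul_eq_mul, dot]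
  refine Finset.sum_congr rfl fun k _ => ?_
  congr 2
  funext j
  simp [Pi.single_apply, eq_comm]

/-- Strong rationality is equivalent to membership in the standard ICE polytope:
for every deviation `f`, the expected regret features of `σ̂` lie in the convex
hull of the expected regret features of `σ`. -/
theorem strongly_rational_iff_standard_ICE
    {d : ℕ} {A Φ : Type} [Fintype A] [Nonempty A] [Fintype Φ] [Nonempty Φ]
    (r : Φ → A → Fin d → ℝ) (σ σhat : A → ℝ)
    (hσ : IsProb σ) (hσhat : IsProb σhat) :
    (∀ w : Fin d → ℝ, Regret r σhat w ≤ Regret r σ w) ↔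
      (∀ f : Φ, expFeat r σhat f ∈ convexHull ℝ (Set.range (expFeat r σ))) := by
  constructor
  · intro h f
    by_contra hx
    obtain ⟨φ, u, hlt, hgt⟩ :=
      geometric_hahn_banach_closed_point
        (convex_convexHull ℝ _)
        ((Set.finite_range (expFeat r σ)).isClosed_convexHull (𝕜 := ℝ)) hx
    set w : Fin d → ℝ := fun k => φ (Pi.single k 1) with hw
    have hub : Regret r σ w ≤ u := by
      apply ciSup_le
      intro g
      rw [← clm_eq_dot]
      exact le_of_lt (hlt _ (subset_convexHull ℝ _ ⟨g, rfl⟩))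
    have hlb : u < Regret r σhat w := by
      refine lt_of_lt_of_le hgt ?_
      rw [clm_eq_dot]
      exact le_ciSup (f := fun g => dot (expFeat r σhat g) w)
        (Set.Finite.bddAbove (Set.finite_range _)) f
    exact absurd (h w) (not_le.mpr (lt_of_le_of_lt hub hlb))
  · intro h w
    apply ciSup_le
    intro f
    have hsub : convexHull ℝ (Set.range (expFeat r σ)) ⊆
        {x | dot x w ≤ Regret r σ w} := by
      apply convexHull_min
      · rintro _ ⟨g, rfl⟩
        exact le_ciSup (f := fun g => dot (expFeat r σ g) w)
          (Set.Finite.bddAbove (Set.finite_range _)) g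
      · exact convex_halfSpace_le (dot_linear w) _
    exact hsub (h f)
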